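/- Let n ≥ 2 and let D be a random variable on a probability space taking values in {1, ..., n} with p_j := P(D = j) > 0 for every j. Let B_1, ..., B_n be integrable random variables with w_j := E[B_j · 1_{D = j}] > 0 for every j. Then there exist non-negative constants (α_{ij})_{i≠j} with Σ_{i≠j} α_{ij} = 1 for every j such that the one-period fairness condition E[B_i · 1_{D = i}] = Σ_{j≠i} α_{ij} E[B_j · 1_{D = j}] holds for every i, if and only if E[B_i · 1_{D = i}] ≤ Σ_{j≠i} E[B_j · 1_{D = j}] for every i. -/

import Mathlib

open MeasureTheory Finset
open scoped ProbabilityTheory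

lemma col_arith (s e S : ℝ) (hs : 0 ≤ s) (hse : s ≤ e) (heS : e ≤ S) :
    max (min S (e + S/2) - max 0 (s + S/2)) 0 + max (min S (e - S/2) - max 0 (s - S/2)) 0
      = e - s := by
  have hS0 : 0 ≤ S := hs.trans (hse.trans heS)
  rw [max_eq_right (by linarith : (0:ℝ) ≤ s + S/2),
      min_eq_right (by linarith : e - S/2 ≤ S)]
  rcases le_total (e + S/2) S with h1 | h1
  · rw [min_eq_right h1, max_eq_left (by linarith : s - S/2 ≤ (0:ℝ)),
      max_eq_left (by linarith : (0:ℝ) ≤ e + S/2 - (s + S/2)),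
      max_eq_right (by linarith : e - S/2 - 0 ≤ (0:ℝ))]
    ring
  · rw [min_eq_left h1]
    rcases le_total s (S/2) with h2 | h2
    · rw [max_eq_left (by linarith : s - S/2 ≤ (0:ℝ)),
        max_eq_left (by linarith : (0:ℝ) ≤ S - (s + S/2)),
        max_eq_left (by linarith : (0:ℝ) ≤ e - S/2 - 0)]
      ring
    · rw [max_eq_right (by linarith : (0:ℝ) ≤ s - S/2),
        max_eq_right (by linarith : S - (s + S/2) ≤ (0:ℝ)),
        max_eq_left (by linarith : (0:ℝ) ≤ e - S/2 - (s - S/2))]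
      ring

lemma exists_doubly (n : ℕ) (w : Fin n → ℝ) (hpos : ∀ j, 0 < w j)
    (hle : ∀ i, 2 * w i ≤ ∑ j, w j) :
    ∃ M : Fin n → Fin n → ℝ,
      (∀ i j, 0 ≤ M i j) ∧ (∀ i, M i i = 0) ∧
      (∀ i, ∑ j, M i j = w i) ∧ (∀ j, ∑ i, M i j = w j) := by
  rcases Nat.eq_zero_or_pos n with rfl | hn0
  · exact ⟨0, fun i => i.elim0, fun i => i.elim0, fun i => i.elim0, fun i => i.elim0⟩
  set S : ℝ := ∑ j, w j with hS
  have : Nonempty (Fin n) := ⟨⟨0, hn0⟩⟩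
  have hSpos : 0 < S := Finset.sum_pos (fun j _ => hpos j) Finset.univ_nonempty
  set w' : ℕ → ℝ := fun k => if h : k < n then w ⟨k, h⟩ else 0 with hw'
  have hw'0 : ∀ k, 0 ≤ w' k := by
    intro k; simp only [hw']; split
    · exact (hpos _).le
    · exact le_rfl
  set C : ℕ → ℝ := fun k => ∑ l ∈ Finset.range k, w' l with hC
  have hCmono : Monotone C := by
    intro a b hab
    exact Finset.sum_le_sum_of_subset_of_nonneg (Finset.range_subset_range.2 hab)
      (fun i _ _ => hw'0 i)
  have hC0 : C 0 = 0 := by simp [hC]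
  have hCn : C n = S := by
    have h1 : ∀ i : Fin n, w' i.1 = w i := fun i => by simp [hw', i.isLt]
    simp only [hC, hS, ← Fin.sum_univ_eq_sum_range (fun k => w' k) n]
    exact Finset.sum_congr rfl fun i _ => h1 i
  have hCsucc : ∀ j : Fin n, C (j.1 + 1) = C j.1 + w j := by
    intro j
    simp [hC, Finset.sum_range_succ, hw', j.isLt]
  have hs0 : ∀ j : Fin n, 0 ≤ C j.1 := fun j => hC0 ▸ hCmono (Nat.zero_le _)
  have heS : ∀ j : Fin n, C (j.1 + 1) ≤ S := fun j => hCn ▸ hCmono j.isLt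
  -- the intervals
  set I : Fin n → Set ℝ := fun j => Set.Ico (C j.1) (C (j.1 + 1)) with hI
  set Jp : Fin n → Set ℝ := fun j => Set.Ico (C j.1 + S/2) (C (j.1 + 1) + S/2) with hJp
  set Jm : Fin n → Set ℝ := fun j => Set.Ico (C j.1 - S/2) (C (j.1 + 1) - S/2) with hJm
  set J : Fin n → Set ℝ := fun j => Jp j ∪ Jm j with hJ
  have hJmeas : ∀ j, MeasurableSet (J j) := fun j =>
    (measurableSet_Ico).union measurableSet_Ico
  have hImeas : ∀ j, MeasurableSet (I j) := fun j => measurableSet_Ico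
  -- locating a point in the partition
  have hfind : ∀ x : ℝ, 0 ≤ x → x < S → ∃ j : Fin n, C j.1 ≤ x ∧ x < C (j.1 + 1) := by
    intro x hx0 hxS
    have hex : ∃ k, x < C k := ⟨n, by rwa [hCn]⟩
    set m := Nat.find hex with hm
    have hm1 : x < C m := Nat.find_spec hex
    have hmne : m ≠ 0 := by
      intro h
      rw [h, hC0] at hm1; linarith
    have hmle : C (m - 1) ≤ x := by
      by_contra h
      exact Nat.find_min hex (Nat.pred_lt hmne) (lt_of_not_ge h)
    have hmn : m - 1 < n := by
      by_contra h
      push_neg at h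
      have := hCmono h
      rw [hCn] at this
      linarith
    refine ⟨⟨m - 1, hmn⟩, hmle, ?_⟩
    show x < C (m - 1 + 1)
    rw [Nat.sub_add_cancel (Nat.one_le_iff_ne_zero.2 hmne)]
    exact hm1
  have hIsub : ∀ j : Fin n, I j ⊆ Set.Ico 0 S := by
    intro j x hx
    exact ⟨le_trans (hs0 j) hx.1, lt_of_lt_of_le hx.2 (heS j)⟩
  have hIunion : (⋃ j, I j) = Set.Ico 0 S := by
    apply Set.Subset.antisymm
    · exact Set.iUnion_subset hIsub
    · intro x hx
      obtain ⟨j, h1, h2⟩ := hfind x hx.1 hx.2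
      exact Set.mem_iUnion.2 ⟨j, h1, h2⟩
  have hJcover : Set.Ico 0 S ⊆ ⋃ j, J j := by
    intro x hx
    rcases lt_or_ge x (S/2) with h | h
    · obtain ⟨j, h1, h2⟩ := hfind (x + S/2) (by linarith [hx.1]) (by linarith [hx.2])
      exact Set.mem_iUnion.2 ⟨j, Or.inr ⟨by linarith, by linarith⟩⟩
    · obtain ⟨j, h1, h2⟩ := hfind (x - S/2) (by linarith) (by linarith [hx.2, hSpos])
      exact Set.mem_iUnion.2 ⟨j, Or.inl ⟨by linarith, by linarith⟩⟩
  -- disjointness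
  have hkey : ∀ i j : Fin n, i ≠ j → min (C (i.1 + 1)) (C (j.1 + 1)) ≤ max (C i.1) (C j.1) := by
    intro i j hij
    rcases lt_or_gt_of_ne (Fin.val_ne_of_ne hij) with h | h
    · exact le_trans (min_le_left _ _) (le_trans (hCmono h) (le_max_right _ _))
    · exact le_trans (min_le_right _ _) (le_trans (hCmono h) (le_max_left _ _))
  have hJdisj : ∀ i j : Fin n, i ≠ j → Disjoint (J i) (J j) := by
    intro i j hij
    have hk := hkey i j hij
    have hsi := hs0 i; have hsj := hs0 j
    have hei := heS i; have hej := heS j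
    rw [hJ]
    have hshift : ∀ (c : ℝ), min (C (i.1+1) + c) (C (j.1+1) + c) ≤ max (C i.1 + c) (C j.1 + c) := by
      intro c; rw [min_add_add_right, max_add_add_right]; exact add_le_add_left hk c
    apply Set.disjoint_union_left.2
    refine ⟨Set.disjoint_union_right.2 ⟨?_, ?_⟩, Set.disjoint_union_right.2 ⟨?_, ?_⟩⟩ <;>
        rw [Set.Ico_disjoint_Ico]
    · exact hshift (S/2)
    · calc min (C (i.1+1) + S/2) (C (j.1+1) - S/2) ≤ C (j.1+1) - S/2 := min_le_right _ _
        _ ≤ C i.1 + S/2 := by linarith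
        _ ≤ max (C i.1 + S/2) (C j.1 - S/2) := le_max_left _ _
    · calc min (C (i.1+1) - S/2) (C (j.1+1) + S/2) ≤ C (i.1+1) - S/2 := min_le_left _ _
        _ ≤ C j.1 + S/2 := by linarith
        _ ≤ max (C i.1 - S/2) (C j.1 + S/2) := le_max_right _ _
    · simpa only [sub_eq_add_neg] using hshift (-(S/2))
  have hIdisj : ∀ i j : Fin n, i ≠ j → Disjoint (I i) (I j) := by
    intro i j hij
    rw [hI, Set.Ico_disjoint_Ico]
    exact hkey i j hij
  have hJpm : ∀ j : Fin n, Disjoint (Jp j) (Jm j) := by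
    intro j
    have hsj := hs0 j; have hej := heS j
    rw [hJp, hJm, Set.Ico_disjoint_Ico]
    calc min (C (j.1+1) + S/2) (C (j.1+1) - S/2) ≤ C (j.1+1) - S/2 := min_le_right _ _
      _ ≤ C j.1 + S/2 := by linarith
      _ ≤ max (C j.1 + S/2) (C j.1 - S/2) := le_max_left _ _
  -- finiteness
  have hfin : ∀ (A : Set ℝ) (i : Fin n), volume (I i ∩ A) ≠ ⊤ := by
    intro A i
    refine ne_top_of_le_ne_top ?_ (measure_mono Set.inter_subset_left)
    rw [hI]
    simp [Real.volume_Ico]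
  set M : Fin n → Fin n → ℝ := fun i j => (volume (I i ∩ J j)).toReal with hM
  refine ⟨M, fun i j => ENNReal.toReal_nonneg, ?_, ?_, ?_⟩
  · -- diagonal
    intro i
    have he : C (i.1 + 1) = C i.1 + w i := hCsucc i
    have hwi := hle i
    have h1 : I i ∩ J i = ∅ := by
      apply Set.eq_empty_iff_forall_notMem.2
      rintro x ⟨hx1, hx2 | hx2⟩
      · obtain ⟨a1, a2⟩ := hx1; obtain ⟨b1, b2⟩ := hx2; linarith
      · obtain ⟨a1, a2⟩ := hx1; obtain ⟨b1, b2⟩ := hx2; linarith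
    simp [hM, h1]
  · -- row sums
    intro i
    have hdisj : ((Finset.univ : Finset (Fin n)) : Set (Fin n)).PairwiseDisjoint (fun j => I i ∩ J j) := by
      intro a _ b _ hab
      exact (hJdisj a b hab).mono Set.inter_subset_right Set.inter_subset_right
    have hmeas : ∀ j ∈ Finset.univ, MeasurableSet (I i ∩ J j) :=
      fun j _ => (hImeas i).inter (hJmeas j)
    have hsum := measure_biUnion_finset (μ := volume) hdisj hmeas
    have hun : ⋃ j ∈ (Finset.univ : Finset (Fin n)), (I i ∩ J j) = I i := by
      apply Set.Subset.antisymm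
      · exact Set.iUnion₂_subset fun j _ => Set.inter_subset_left
      · intro x hx
        obtain ⟨j, hj⟩ := Set.mem_iUnion.1 (hJcover (hIsub i hx))
        exact Set.mem_biUnion (Finset.mem_univ j) ⟨hx, hj⟩
    have : ∑ j, M i j = (volume (I i)).toReal := by
      rw [hM, ← ENNReal.toReal_sum (fun j _ => hfin (J j) i), ← hsum, hun]
    rw [this, hI]
    simp only [Real.volume_Ico, hCsucc i, add_sub_cancel_left]
    exact ENNReal.toReal_ofReal (hpos i).le
  · -- column sums
    intro j
    have he : C (j.1 + 1) = C j.1 + w j := hCsucc j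
    have hsj := hs0 j
    have hej := heS j
    have hdisj : ((Finset.univ : Finset (Fin n)) : Set (Fin n)).PairwiseDisjoint (fun i => I i ∩ J j) := by
      intro a _ b _ hab
      exact (hIdisj a b hab).mono Set.inter_subset_left Set.inter_subset_left
    have hmeas : ∀ i ∈ Finset.univ, MeasurableSet (I i ∩ J j) :=
      fun i _ => (hImeas i).inter (hJmeas j)
    have hsum := measure_biUnion_finset (μ := volume) hdisj hmeas
    have hun : ⋃ i ∈ (Finset.univ : Finset (Fin n)), (I i ∩ J j) = Set.Ico 0 S ∩ J j := by
      ext x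
      constructor
      · intro hx
        obtain ⟨i, -, hxi, hxj⟩ := Set.mem_iUnion₂.1 hx
        exact ⟨hIsub i hxi, hxj⟩
      · rintro ⟨hx0, hxJ⟩
        obtain ⟨i, hi1, hi2⟩ := hfind x hx0.1 hx0.2
        exact Set.mem_biUnion (Finset.mem_univ i) ⟨⟨hi1, hi2⟩, hxJ⟩
    have hvol : volume (Set.Ico 0 S ∩ J j)
        = ENNReal.ofReal (S ⊓ (C (j.1+1) + S/2) - 0 ⊔ (C j.1 + S/2))
          + ENNReal.ofReal (S ⊓ (C (j.1+1) - S/2) - 0 ⊔ (C j.1 - S/2)) := by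
      rw [hJ, Set.inter_union_distrib_left, measure_union
        (((hJpm j).mono Set.inter_subset_right Set.inter_subset_right))
        (measurableSet_Ico.inter measurableSet_Ico)]
      rw [hJp, hJm, Set.Ico_inter_Ico, Set.Ico_inter_Ico, Real.volume_Ico, Real.volume_Ico]
    have : ∑ i, M i j = (volume (Set.Ico 0 S ∩ J j)).toReal := by
      rw [hM, ← ENNReal.toReal_sum (fun i _ => hfin (J j) i), ← hsum, hun]
    rw [this, hvol, ENNReal.toReal_add ENNReal.ofReal_ne_top ENNReal.ofReal_ne_top,
      ENNReal.toReal_ofReal', ENNReal.toReal_ofReal']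
    have hwj := hpos j
    rw [col_arith (C j.1) (C (j.1+1)) S hsj (by linarith) hej, he]
    ring


/-- One-period fairness with properness: non-negative splitting fractions with unit
column sums satisfying the periodic fairness condition exist iff no participant's
expected forfeited balance exceeds the sum of the others'. -/
theorem stmt_8 {Ω : Type*} [MeasureSpace Ω]
    [IsProbabilityMeasure (ℙ : Measure Ω)]
    (n : ℕ) (hn : 2 ≤ n)
    (D : Ω → Fin n) (hD : Measurable D)
    (hp : ∀ j, 0 < ℙ {ω | D ω = j})
    (B : Fin n → Ω → ℝ) (hB : ∀ j, Integrable (B j) ℙ)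
    (w : Fin n → ℝ)
    (hw : ∀ j, w j = ∫ ω, Set.indicator {ω' | D ω' = j} (B j) ω ∂ℙ)
    (hwpos : ∀ j, 0 < w j) :
    (∃ α : Fin n → Fin n → ℝ,
        (∀ i j, i ≠ j → 0 ≤ α i j) ∧
        (∀ j, ∑ i ∈ Finset.univ.erase j, α i j = 1) ∧
        (∀ i, w i = ∑ j ∈ Finset.univ.erase i, α i j * w j)) ↔
      ∀ i, w i ≤ ∑ j ∈ Finset.univ.erase i, w j := by
  constructor
  · rintro ⟨α, hα0, hcolsum, hfair⟩ i
    rw [hfair i]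
    refine Finset.sum_le_sum fun j hj => ?_
    have hji : j ≠ i := Finset.ne_of_mem_erase hj
    have h1 : α i j ≤ 1 := by
      rw [← hcolsum j]
      exact Finset.single_le_sum (f := fun i' => α i' j)
        (fun i' hi' => hα0 i' j (Finset.ne_of_mem_erase hi'))
        (Finset.mem_erase.2 ⟨hji.symm, Finset.mem_univ i⟩)
    calc α i j * w j ≤ 1 * w j := mul_le_mul_of_nonneg_right h1 (hwpos j).le
      _ = w j := one_mul _
  · intro hle
    have h2 : ∀ i, 2 * w i ≤ ∑ j, w j := by
      intro i
      have h3 : ∑ j ∈ Finset.univ.erase i, w j = (∑ j, w j) - w i :=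
        Finset.sum_erase_eq_sub (Finset.mem_univ i)
      have := hle i
      linarith
    obtain ⟨M, hM0, hMd, hMrow, hMcol⟩ := exists_doubly n w hwpos h2
    refine ⟨fun i j => M i j / w j, fun i j _ => div_nonneg (hM0 i j) (hwpos j).le, ?_, ?_⟩
    · intro j
      rw [← Finset.sum_div, Finset.sum_erase_eq_sub (Finset.mem_univ j), hMcol j, hMd j,
        sub_zero, div_self (hwpos j).ne']
    · intro i
      have hc : ∀ j ∈ Finset.univ.erase i, M i j / w j * w j = M i j := fun j _ =>
        div_mul_cancel₀ _ (hwpos j).ne'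
      rw [Finset.sum_congr rfl hc, Finset.sum_erase_eq_sub (Finset.mem_univ i), hMrow i,
        hMd i, sub_zero]
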